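/- Let φ: ℝ^d → ℝ^n be injective linear, b ∈ ℝ^n, and suppose the lattice L = φ(ℝ^d) ∩ ℤ^n has rank d (i.e., φ(ℝ^d) is a rational subspace spanned by L). Then the quotient Λ/L of the set of nonempty-chamber labels Λ := {x ∈ ℤ^n : Δ_x ≠ ∅} by the translation action of L is finite. -/

import Mathlib

/-- The chamber `Δ_x = {a : xᵢ < φ(a)ᵢ + bᵢ < xᵢ + 1 ∀ i}`. -/
def chamber {d n : ℕ} (φ : (Fin d → ℝ) →ₗ[ℝ] (Fin n → ℝ)) (b : Fin n → ℝ)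
    (x : Fin n → ℤ) : Set (Fin d → ℝ) :=
  {a | ∀ i, (x i : ℝ) < φ a i + b i ∧ φ a i + b i < x i + 1}

/-- If `φ : ℝᵈ → ℝⁿ` is injective linear and its image is a rational subspace,
i.e. it is spanned by the lattice `L = φ(ℝᵈ) ∩ ℤⁿ` (so `L` has rank `d`), then the
quotient `Λ/L` of the set `Λ = {x ∈ ℤⁿ : Δ_x ≠ ∅}` of labels of nonempty chambers by
the translation action of `L` is finite.  This is the finiteness of the set of
chambers of the toric hyperplane arrangement `𝔄^tor`. -/
theorem finite_chambers_mod_lattice {d n : ℕ}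
    (φ : (Fin d → ℝ) →ₗ[ℝ] (Fin n → ℝ)) (hφ : Function.Injective φ) (b : Fin n → ℝ)
    (hrat : LinearMap.range φ =
      Submodule.span ℝ {w : Fin n → ℝ | w ∈ LinearMap.range φ ∧ ∀ i, ∃ m : ℤ, w i = (m : ℝ)}) :
    Finite (Quot fun x y : {x : Fin n → ℤ // (chamber φ b x).Nonempty} =>
      ∃ ℓ : Fin n → ℤ, (fun i => (ℓ i : ℝ)) ∈ Set.range φ ∧ y.1 = x.1 + ℓ) := by
  classical
  set S : Set (Fin n → ℝ) :=
    {w : Fin n → ℝ | w ∈ LinearMap.range φ ∧ ∀ i, ∃ m : ℤ, w i = (m : ℝ)} with hS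
  -- a finite subset of S spanning the range
  have hsub : ∀ j : Fin d, ∃ Tj : Finset (Fin n → ℝ),
      ↑Tj ⊆ S ∧ φ (Pi.single j 1) ∈ Submodule.span ℝ (Tj : Set (Fin n → ℝ)) := by
    intro j
    have : φ (Pi.single j 1) ∈ Submodule.span ℝ S := by
      rw [← hrat]; exact ⟨Pi.single j 1, rfl⟩
    exact Submodule.mem_span_finite_of_mem_span this
  choose Tj hTj1 hTj2 using hsub
  set T : Finset (Fin n → ℝ) := Finset.univ.biUnion Tj with hT
  have hTS : (T : Set (Fin n → ℝ)) ⊆ S := by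
    intro w hw
    simp only [hT, Finset.coe_biUnion, Set.mem_iUnion, Finset.mem_coe] at hw
    obtain ⟨j, -, hj⟩ := hw
    exact hTj1 j hj
  have hrange : ∀ a : Fin d → ℝ, φ a ∈ Submodule.span ℝ (T : Set (Fin n → ℝ)) := by
    intro a
    have ha : a = ∑ j : Fin d, a j • (Pi.single j (1:ℝ) : Fin d → ℝ) := by
      funext i
      simp [Pi.single_apply, Finset.sum_apply, mul_ite, Finset.sum_ite_eq']
    rw [ha, map_sum]
    refine Submodule.sum_mem _ fun j _ => ?_
    rw [map_smul]
    refine Submodule.smul_mem _ _ ?_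
    refine Submodule.span_mono ?_ (hTj2 j)
    intro w hw
    exact Finset.mem_coe.2 (Finset.mem_biUnion.2 ⟨j, Finset.mem_univ j, hw⟩)
  -- preimages and integrality
  have hpre : ∀ w ∈ T, ∃ v, φ v = w := fun w hw => (hTS hw).1
  choose! v hv using hpre
  have hint : ∀ w ∈ T, ∀ i, ((⌈w i⌉ : ℤ) : ℝ) = w i := by
    intro w hw i
    obtain ⟨m, hm⟩ := (hTS hw).2 i
    rw [hm, Int.ceil_intCast]
  set C : ℝ := ∑ w ∈ T, ‖w‖ with hC
  have hC0 : 0 ≤ C := Finset.sum_nonneg fun w _ => norm_nonneg w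
  set K : ℤ := ⌈C + ‖b‖ + 1⌉ with hK
  have hKge : C + ‖b‖ + 1 ≤ (K : ℝ) := Int.le_ceil _
  -- the finite index type
  let α := {y : Fin n → ℤ // (chamber φ b y).Nonempty ∧ ∀ i, |y i| ≤ K}
  have hαfin : Finite α := by
    have : ∀ (y : α) (i : Fin n), y.1 i ∈ Set.Icc (-K) K := by
      intro y i
      exact Set.mem_Icc.2 (abs_le.1 (y.2.2 i))
    refine Finite.of_injective (fun y : α => fun i => (⟨y.1 i, this y i⟩ : Set.Icc (-K) K)) ?_
    intro y z h
    apply Subtype.ext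
    funext i
    exact congrArg Subtype.val (congrFun h i)
  refine Finite.of_surjective
    (fun y : α => Quot.mk _ (⟨y.1, y.2.1⟩ :
      {x : Fin n → ℤ // (chamber φ b x).Nonempty})) ?_
  intro q
  obtain ⟨⟨x, hx⟩, rfl⟩ := Quot.exists_rep q
  obtain ⟨a, ha⟩ := hx
  obtain ⟨c, -, hc⟩ := Submodule.mem_span_finset.1 (hrange a)
  set M : Fin n → ℤ := fun i => ∑ w ∈ T, ⌊c w⌋ * ⌈w i⌉ with hM
  set m : Fin d → ℝ := ∑ w ∈ T, ((⌊c w⌋ : ℝ)) • v w with hm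
  have hφm : φ m = fun i => (M i : ℝ) := by
    funext i
    rw [hm, map_sum]
    simp only [map_smul]
    rw [Finset.sum_apply]
    have : ∀ w ∈ T, ((⌊c w⌋ : ℝ) • φ (v w)) i = (⌊c w⌋ : ℝ) * w i := by
      intro w hw
      rw [hv w hw]; simp
    rw [Finset.sum_congr rfl this, hM]
    push_cast
    refine Finset.sum_congr rfl fun w hw => ?_
    rw [hint w hw]
  have hφa : ∀ i, φ a i = ∑ w ∈ T, c w * w i := by
    intro i
    rw [← hc, Finset.sum_apply]
    simp
  have hdiff : ∀ i, |φ a i - (M i : ℝ)| ≤ C := by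
    intro i
    have h1 : φ a i - (M i : ℝ) = ∑ w ∈ T, Int.fract (c w) * w i := by
      rw [hφa i, hM]
      push_cast
      rw [← Finset.sum_sub_distrib]
      refine Finset.sum_congr rfl fun w hw => ?_
      rw [hint w hw, Int.fract]
      ring
    rw [h1, hC]
    refine (Finset.abs_sum_le_sum_abs _ _).trans (Finset.sum_le_sum fun w hw => ?_)
    rw [abs_mul]
    have h2 : |Int.fract (c w)| ≤ 1 := by
      rw [abs_of_nonneg (Int.fract_nonneg _)]
      exact (Int.fract_lt_one _).le
    have h3 : |w i| ≤ ‖w‖ := by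
      have := norm_le_pi_norm w i
      rwa [Real.norm_eq_abs] at this
    calc |Int.fract (c w)| * |w i| ≤ 1 * ‖w‖ :=
          mul_le_mul h2 h3 (abs_nonneg _) zero_le_one
      _ = ‖w‖ := one_mul _
  set y : Fin n → ℤ := fun i => x i - M i with hy
  have hbn : ∀ i, |b i| ≤ ‖b‖ := by
    intro i
    have := norm_le_pi_norm b i
    rwa [Real.norm_eq_abs] at this
  have hych : (chamber φ b y).Nonempty := by
    refine ⟨a - m, fun i => ?_⟩
    have h1 := (ha i).1
    have h2 := (ha i).2
    have h3 : φ (a - m) i = φ a i - (M i : ℝ) := by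
      rw [map_sub, hφm]; simp
    constructor
    · rw [h3, hy]; push_cast; linarith
    · rw [h3, hy]; push_cast; linarith
  have hybd : ∀ i, |y i| ≤ K := by
    intro i
    have h1 := (ha i).1
    have h2 := (ha i).2
    have h3 := hdiff i
    have h4 := abs_le.1 h3
    have h5 := abs_le.1 (hbn i)
    rw [abs_le]
    constructor
    · rw [← @Int.cast_le ℝ]
      push_cast [hy]
      linarith [h4.1, h4.2, h5.1, h5.2, hKge]
    · rw [← @Int.cast_le ℝ]
      push_cast [hy]
      linarith [h4.1, h4.2, h5.1, h5.2, hKge]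
  refine ⟨⟨y, hych, hybd⟩, ?_⟩
  refine (Quot.sound ?_).symm
  refine ⟨fun i => -M i, ⟨-m, ?_⟩, ?_⟩
  · rw [map_neg, hφm]
    funext i
    push_cast
    simp
  · funext i
    simp [hy]
    ring
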